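/- Fix n ≥ 2, 1 ≤ k ≤ n and 1 ≤ i < n, and let (1^k) denote the single-column partition. Let b ∈ SVT^n((1^k)) satisfy e_i b = 0 and e_i^K b = 0, and let S (the i-K-string through b) be the set of all nonzero elements of the form f_i^m b (m ≥ 0) and f_i^m f_i^K b (m ≥ 0). Then for every w ∈ S_n and every reduced word (i_1,…,i_ℓ) of w, the intersection SVT^n_{(i_1,…,i_ℓ)}((1^k)) ∩ S is either empty, equal to all of S, or equal to the singleton {b}. -/

import Mathlib

open scoped Classical

noncomputable section

namespace SVTCrystal

/-- A filling assigns to each (row, column) position (0-indexed) a finite set of entries. -/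
abbrev Filling : Type := ℕ → ℕ → Finset ℕ

/-- `lam` is a partition shape with at most `n` rows. -/
def IsPartitionShape (n : ℕ) (lam : ℕ → ℕ) : Prop :=
  (∀ r, lam (r + 1) ≤ lam r) ∧ (∀ r, n ≤ r → lam r = 0)

/-- Semistandard set-valued tableau of shape `lam` with entries in `{1,…,n}`. -/
structure IsSVT (n : ℕ) (lam : ℕ → ℕ) (t : Filling) : Prop where
  boxNonempty : ∀ r c, c < lam r → (t r c).Nonempty
  emptyOutside : ∀ r c, ¬ c < lam r → t r c = ∅
  entryBounds : ∀ r c a, a ∈ t r c → 1 ≤ a ∧ a ≤ n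
  rowWeak : ∀ r c a b, a ∈ t r c → b ∈ t r (c + 1) → a ≤ b
  colStrict : ∀ r c a b, a ∈ t r c → b ∈ t (r + 1) c → a < b

/-- Semistandard Young tableau: a set-valued tableau all of whose boxes are singletons. -/
def IsSSYT (n : ℕ) (lam : ℕ → ℕ) (t : Filling) : Prop :=
  IsSVT n lam t ∧ ∀ r c, c < lam r → (t r c).card = 1

/-- The weight: `wt n lam t j` is the number of boxes of `t` containing the entry `j`. -/
def wt (n : ℕ) (lam : ℕ → ℕ) (t : Filling) (j : ℕ) : ℕ :=
  ((Finset.range n ×ˢ Finset.range (lam 0)).filter (fun p => j ∈ t p.1 p.2)).card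

/-- The excess: total number of extra entries. -/
def excess (n : ℕ) (lam : ℕ → ℕ) (t : Filling) : ℕ :=
  ∑ p ∈ Finset.range n ×ˢ Finset.range (lam 0), ((t p.1 p.2).card - 1)

/-- Column `c` contains the entry `a`. -/
def colHas (n : ℕ) (t : Filling) (a c : ℕ) : Prop := ∃ r, r < n ∧ a ∈ t r c

/-- The sign of column `c` for the `i`-signature rule: `+` (true) if the column contains `i`
but not `i+1`, `-` (false) if it contains `i+1` but not `i`. -/
def colSign (n : ℕ) (t : Filling) (i c : ℕ) : Option Bool :=
  if colHas n t i c ∧ ¬ colHas n t (i + 1) c then some true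
  else if colHas n t (i + 1) c ∧ ¬ colHas n t i c then some false
  else none

/-- The number of `-` (false) signs left uncanceled after scanning the word left-to-right,
iteratively canceling `-+` pairs. -/
def mctr (w : List Bool) : ℕ := w.foldl (fun cnt b => if b then cnt - 1 else cnt + 1) 0

/-- The number of `+` (true) signs left uncanceled, scanning right-to-left. -/
def pctr (w : List Bool) : ℕ := w.foldr (fun b cnt => if b then cnt + 1 else cnt - 1) 0

/-- The word of column signs of the columns before column `c`. -/
def colWordBefore (n : ℕ) (t : Filling) (i c : ℕ) : List Bool :=
  (List.range c).filterMap (colSign n t i)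

/-- The word of column signs of the columns after column `c` (among columns `< ncols`). -/
def colWordAfter (n ncols : ℕ) (t : Filling) (i c : ℕ) : List Bool :=
  ((List.range ncols).drop (c + 1)).filterMap (colSign n t i)

/-- Column `c` carries an uncanceled `+` for the `i`-signature rule. -/
def PlusCol (n ncols : ℕ) (t : Filling) (i c : ℕ) : Prop :=
  c < ncols ∧ colSign n t i c = some true ∧ mctr (colWordBefore n t i c) = 0

/-- Column `c` carries an uncanceled `-` for the `i`-signature rule. -/
def MinusCol (n ncols : ℕ) (t : Filling) (i c : ℕ) : Prop :=
  c < ncols ∧ colSign n t i c = some false ∧ pctr (colWordAfter n ncols t i c) = 0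

/-- Column `c` is the rightmost uncanceled `+`. -/
def fBoxCol (n ncols : ℕ) (t : Filling) (i c : ℕ) : Prop :=
  PlusCol n ncols t i c ∧ ∀ c', PlusCol n ncols t i c' → c' ≤ c

/-- Column `c` is the leftmost uncanceled `-`. -/
def eBoxCol (n ncols : ℕ) (t : Filling) (i c : ℕ) : Prop :=
  MinusCol n ncols t i c ∧ ∀ c', MinusCol n ncols t i c' → c ≤ c'

/-- Replace the content of the box in row `r`, column `c` by `A`. -/
def updateBox (t : Filling) (r c : ℕ) (A : Finset ℕ) : Filling :=
  fun r' c' => if r' = r ∧ c' = c then A else t r' c'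

/-- The set-valued crystal operator `f_i` (signature rule). -/
def fRaw (n : ℕ) (lam : ℕ → ℕ) (i : ℕ) (t : Filling) : Option Filling :=
  if h : ∃ c, fBoxCol n (lam 0) t i c then
    let c := Classical.choose h
    if hr : ∃ r, r < n ∧ i ∈ t r c then
      let r := Classical.choose hr
      if i ∈ t r (c + 1) then
        some (updateBox (updateBox t r (c + 1) ((t r (c + 1)).erase i)) r c
          (insert (i + 1) (t r c)))
      else some (updateBox t r c (insert (i + 1) ((t r c).erase i)))
    else none
  else none

/-- The set-valued crystal operator `e_i` (signature rule). -/
def eRaw (n : ℕ) (lam : ℕ → ℕ) (i : ℕ) (t : Filling) : Option Filling :=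
  if h : ∃ c, eBoxCol n (lam 0) t i c then
    let c := Classical.choose h
    if hr : ∃ r, r < n ∧ (i + 1) ∈ t r c then
      let r := Classical.choose hr
      if 0 < c ∧ (i + 1) ∈ t r (c - 1) then
        some (updateBox (updateBox t r (c - 1) ((t r (c - 1)).erase (i + 1))) r c
          (insert i (t r c)))
      else some (updateBox t r c (insert i ((t r c).erase (i + 1))))
    else none
  else none

/-- Iterate a partially-defined operator. -/
def iterOpt (g : Filling → Option Filling) : ℕ → Filling → Option Filling
  | 0, t => some t
  | m + 1, t => (iterOpt g m t).bind g

/-- Highest weight (Yamanouchi) elements. -/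
def IsYamanouchi (n : ℕ) (lam : ℕ → ℕ) (t : Filling) : Prop :=
  ∀ i, 1 ≤ i → i < n → eRaw n lam i t = none

/-- Closure of `t0` under the crystal operators `e_i`, `f_i` for `1 ≤ i < n`. -/
inductive Reach (n : ℕ) (lam : ℕ → ℕ) (t0 : Filling) : Filling → Prop
  | base : Reach n lam t0 t0
  | stepF : ∀ {t t' : Filling} (i : ℕ), 1 ≤ i → i < n → Reach n lam t0 t →
      fRaw n lam i t = some t' → Reach n lam t0 t'
  | stepE : ∀ {t t' : Filling} (i : ℕ), 1 ≤ i → i < n → Reach n lam t0 t →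
      eRaw n lam i t = some t' → Reach n lam t0 t'

/-- The one-row partition `(s)`. -/
def rowShape (s : ℕ) : ℕ → ℕ := fun r => if r = 0 then s else 0

/-- The one-column partition `(1^k)`. -/
def colShape (k : ℕ) : ℕ → ℕ := fun r => if r < k then 1 else 0

/-- The hook partition `(s, 1^e)`. -/
def hookShape (s e : ℕ) : ℕ → ℕ := fun r => if r = 0 then s else if r ≤ e then 1 else 0

/-! ### K-theory crystal operators (for single rows and single columns) -/

/-- Some box of the tableau contains the entry `a`. -/
def containsEntry (n : ℕ) (lam : ℕ → ℕ) (t : Filling) (a : ℕ) : Prop :=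
  ∃ r c, r < n ∧ c < lam r ∧ a ∈ t r c

/-- `p` is the rightmost box of `t` containing `i`. -/
def KBoxF (n : ℕ) (lam : ℕ → ℕ) (t : Filling) (i : ℕ) (p : ℕ × ℕ) : Prop :=
  p.1 < n ∧ p.2 < lam p.1 ∧ i ∈ t p.1 p.2 ∧
    ∀ q : ℕ × ℕ, q.1 < n → q.2 < lam q.1 → i ∈ t q.1 q.2 → q.2 ≤ p.2

/-- The K-crystal operator `f_i^K`: if `i` occurs in `t` and `i+1` does not, add `i+1` to
the rightmost box containing `i`; otherwise `0`. -/
def fK (n : ℕ) (lam : ℕ → ℕ) (i : ℕ) (t : Filling) : Option Filling :=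
  if h : (∃ p : ℕ × ℕ, KBoxF n lam t i p) ∧ ¬ containsEntry n lam t (i + 1) then
    let p := Classical.choose h.1
    some (updateBox t p.1 p.2 (insert (i + 1) (t p.1 p.2)))
  else none

/-- The K-crystal operator `e_i^K`: delete `i+1` from the box containing both `i` and `i+1`,
if such a box exists; otherwise `0`. -/
def eK (n : ℕ) (lam : ℕ → ℕ) (i : ℕ) (t : Filling) : Option Filling :=
  if h : ∃ p : ℕ × ℕ, p.1 < n ∧ p.2 < lam p.1 ∧ i ∈ t p.1 p.2 ∧ (i + 1) ∈ t p.1 p.2 then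
    let p := Classical.choose h
    some (updateBox t p.1 p.2 ((t p.1 p.2).erase (i + 1)))
  else none

/-- `t'` is the result of applying `g` to `t` as many times as possible. -/
def MaxApply (g : Filling → Option Filling) (t t' : Filling) : Prop :=
  (∃ m, iterOpt g m t = some t') ∧ g t' = none

/-- One Demazure step: apply `e_i` as many times as possible, then `e_i^K` as many times
as possible (here `eKop i` is the `i`-th K-operator). -/
def DemStep (n : ℕ) (lam : ℕ → ℕ) (eKop : ℕ → Filling → Option Filling) (i : ℕ)
    (t t' : Filling) : Prop :=
  ∃ t1, MaxApply (eRaw n lam i) t t1 ∧ MaxApply (eKop i) t1 t'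

/-- `DemReach n lam eKop [i₁,…,iℓ] t u` holds when
`u = (e_{iℓ}^K)^max e_{iℓ}^max ⋯ (e_{i₁}^K)^max e_{i₁}^max t`. -/
def DemReach (n : ℕ) (lam : ℕ → ℕ) (eKop : ℕ → Filling → Option Filling) :
    List ℕ → Filling → Filling → Prop
  | [], t, u => t = u
  | i :: rest, t, u => ∃ t2, DemStep n lam eKop i t t2 ∧ DemReach n lam eKop rest t2 u

/-- The minimal highest weight tableau `u_λ`, whose row `r` boxes are all `{r+1}`. -/
def uTab (lam : ℕ → ℕ) : Filling := fun r c => if c < lam r then {r + 1} else ∅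

/-- The K-Demazure crystal associated with a word `[i₁,…,iℓ]`. -/
def KDem (n : ℕ) (lam : ℕ → ℕ) (eKop : ℕ → Filling → Option Filling) (word : List ℕ) :
    Set Filling :=
  {t | IsSVT n lam t ∧ DemReach n lam eKop word t (uTab lam)}

/-! ### Permutations and reduced words -/

/-- The permutation `s_{i₁} ⋯ s_{iℓ}` of a word `[i₁,…,iℓ]`, where `s_i` swaps `i`, `i+1`. -/
def wordPerm (word : List ℕ) : Equiv.Perm ℕ :=
  (word.map fun i => Equiv.swap i (i + 1)).prod

/-- `word` is a reduced word for `w` in the Coxeter generators `s_1, …, s_{n-1}`. -/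
def IsReducedWord (n : ℕ) (w : Equiv.Perm ℕ) (word : List ℕ) : Prop :=
  (∀ i ∈ word, 1 ≤ i ∧ i < n) ∧ wordPerm word = w ∧
    ∀ word' : List ℕ, (∀ i ∈ word', 1 ≤ i ∧ i < n) → wordPerm word' = w →
      word.length ≤ word'.length

/-- The Coxeter length of a permutation of `{1,…,n}`. -/
def permLength (n : ℕ) (σ : Equiv.Perm ℕ) : ℕ :=
  sInf {l | ∃ word : List ℕ, (∀ i ∈ word, 1 ≤ i ∧ i < n) ∧ wordPerm word = σ ∧
    word.length = l}

/-- The parabolic subgroup generated by `s_2, …, s_{n-1}`. -/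
def parabolic (n : ℕ) : Subgroup (Equiv.Perm ℕ) :=
  Subgroup.closure {σ | ∃ i, 2 ≤ i ∧ i < n ∧ σ = Equiv.swap i (i + 1)}

/-! ### Polynomials -/

/-- Polynomials in `x₁, x₂, …` over `ℤ[β]`; the variable `β` is `Polynomial.X`. -/
abbrev KPoly : Type := MvPolynomial ℕ (Polynomial ℤ)

/-- The scalar `β`. -/
def betaP : KPoly := MvPolynomial.C Polynomial.X

/-- The monomial `x^{wt(T)} = x₁^{wt₁} ⋯ xₙ^{wtₙ}`. -/
def xwt (n : ℕ) (lam : ℕ → ℕ) (t : Filling) : KPoly :=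
  ∏ j ∈ Finset.Icc 1 n, (MvPolynomial.X j : KPoly) ^ wt n lam t j

/-- The β-character `∑_{T ∈ S} β^{excess T} x^{wt T}` of a set of tableaux. -/
def charSet (n : ℕ) (lam : ℕ → ℕ) (S : Set Filling) : KPoly :=
  ∑ᶠ t ∈ S, betaP ^ excess n lam t * xwt n lam t

/-- The symmetric Grothendieck polynomial `𝔊_λ(x₁,…,xₙ; β)`. -/
def Groth (n : ℕ) (lam : ℕ → ℕ) : KPoly :=
  charSet n lam {t | IsSVT n lam t}

/-- The Schur polynomial `s_μ(x₁,…,xₙ)`. -/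
def SchurP (n : ℕ) (mu : ℕ → ℕ) : KPoly :=
  ∑ᶠ t ∈ {t : Filling | IsSSYT n mu t}, xwt n mu t

/-- The numerator defining the Demazure–Lascoux operator `ϖ_i`. -/
def DLnum (i : ℕ) (f : KPoly) : KPoly :=
  (MvPolynomial.X i + betaP * MvPolynomial.X i * MvPolynomial.X (i + 1)) * f -
    (MvPolynomial.X (i + 1) + betaP * MvPolynomial.X i * MvPolynomial.X (i + 1)) *
      (MvPolynomial.rename (Equiv.swap i (i + 1)) f)

/-- `DL` implements the Demazure–Lascoux operators `ϖ_i` for `1 ≤ i < n`: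
`(x_i - x_{i+1}) · ϖ_i f` equals the defining numerator. -/
def IsDLOp (n : ℕ) (DL : ℕ → KPoly → KPoly) : Prop :=
  ∀ i, 1 ≤ i → i < n → ∀ f : KPoly,
    (MvPolynomial.X i - MvPolynomial.X (i + 1)) * DL i f = DLnum i f

/-- `applyDL DL [i₁,…,iℓ] f = ϖ_{i₁} ϖ_{i₂} ⋯ ϖ_{iℓ} f`. -/
def applyDL (DL : ℕ → KPoly → KPoly) : List ℕ → KPoly → KPoly
  | [], f => f
  | i :: rest, f => DL i (applyDL DL rest f)

/-! ### Auxiliary development for the proof -/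

section Aux

/-! #### Generic `iterOpt` and `MaxApply` lemmas -/

lemma iterOpt_add (g : Filling → Option Filling) (a : ℕ) (t : Filling) :
    ∀ b, iterOpt g (a + b) t = (iterOpt g a t).bind (fun s => iterOpt g b s) := by
  intro b
  induction b with
  | zero => cases h : iterOpt g a t <;> simp [iterOpt, h]
  | succ b ih =>
      have : a + (b + 1) = (a + b) + 1 := rfl
      rw [this]
      show (iterOpt g (a + b) t).bind g = _
      rw [ih]
      cases h : iterOpt g a t with
      | none => simp
      | some s => simp [iterOpt]

lemma iterOpt_fixed (g : Filling → Option Filling) (t : Filling) (hg : g t = none) :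
    ∀ c x, iterOpt g c t = some x → x = t := by
  intro c
  induction c with
  | zero => intro x hx; exact (Option.some.inj hx).symm
  | succ c ih =>
      intro x hx
      have hx' : (iterOpt g c t).bind g = some x := hx
      cases h : iterOpt g c t with
      | none => rw [h] at hx'; exact absurd hx' (by simp)
      | some y =>
          rw [h] at hx'
          have hy : g y = some x := hx'
          rw [ih y h, hg] at hy
          exact absurd hy (by simp)

lemma maxApply_unique {g : Filling → Option Filling} {t a b : Filling}
    (ha : MaxApply g t a) (hb : MaxApply g t b) : a = b := by
  obtain ⟨⟨m, hm⟩, hga⟩ := ha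
  obtain ⟨⟨m', hm'⟩, hgb⟩ := hb
  rcases le_total m m' with h | h
  · obtain ⟨d, rfl⟩ := Nat.exists_eq_add_of_le h
    rw [iterOpt_add, hm] at hm'
    exact (iterOpt_fixed g a hga d b hm').symm
  · obtain ⟨d, rfl⟩ := Nat.exists_eq_add_of_le h
    rw [iterOpt_add, hm'] at hm
    exact iterOpt_fixed g b hgb d a hm

lemma iterOpt_none_of_none (g : Filling → Option Filling) (t : Filling) (hg : g t = none) :
    ∀ m, iterOpt g (m + 1) t = none := by
  intro m
  induction m with
  | zero => show (iterOpt g 0 t).bind g = none; simp [iterOpt, hg]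
  | succ m ih => show (iterOpt g (m + 1) t).bind g = none; rw [ih]; rfl

lemma iterOpt_eq_self (g : Filling → Option Filling) (t x : Filling) (hg : g t = none) :
    (∃ m, iterOpt g m t = some x) ↔ x = t := by
  constructor
  · rintro ⟨m, hm⟩; exact iterOpt_fixed g t hg m x hm
  · rintro rfl; exact ⟨0, rfl⟩

end Aux

section Column

variable {n k : ℕ}

/-! #### Structure of column tableaux -/

lemma colShape_apply (k r : ℕ) : colShape k r = if r < k then 1 else 0 := rfl

lemma colShape_zero (hk1 : 1 ≤ k) : colShape k 0 = 1 := by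
  simp only [colShape_apply, if_pos (by omega : 0 < k)]

lemma mem_box_lt {t : Filling} (ht : IsSVT n (colShape k) t) {r c a : ℕ}
    (ha : a ∈ t r c) : c = 0 ∧ r < k := by
  by_contra h
  have : ¬ c < colShape k r := by
    rw [colShape_apply]
    split_ifs with hr
    · omega
    · omega
  rw [ht.emptyOutside r c this] at ha
  simp at ha

lemma box_nonempty {t : Filling} (ht : IsSVT n (colShape k) t) {r : ℕ} (hr : r < k) :
    (t r 0).Nonempty := by
  apply ht.boxNonempty
  rw [colShape_apply]
  simp [hr]

lemma chain_lt {t : Filling} (ht : IsSVT n (colShape k) t) :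
    ∀ d r a a', a ∈ t r 0 → a' ∈ t (r + d + 1) 0 → a < a' := by
  intro d
  induction d with
  | zero => intro r a a' ha ha'; exact ht.colStrict r 0 a a' ha ha'
  | succ d ih =>
      intro r a a' ha ha'
      have hrd : r + d + 1 < k := by
        have := (mem_box_lt ht ha').2
        omega
      obtain ⟨y, hy⟩ := box_nonempty ht hrd
      have h1 : a < y := ih r a y ha hy
      have h2 : y < a' := ht.colStrict (r + d + 1) 0 y a' hy (by
        have : r + (d + 1) + 1 = (r + d + 1) + 1 := by ring
        rwa [this] at ha')
      omega

lemma chain_lt' {t : Filling} (ht : IsSVT n (colShape k) t) {r r' a a' : ℕ}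
    (h : r < r') (ha : a ∈ t r 0) (ha' : a' ∈ t r' 0) : a < a' := by
  obtain ⟨d, rfl⟩ : ∃ d, r' = r + d + 1 := ⟨r' - r - 1, by omega⟩
  exact chain_lt ht d r a a' ha ha'

lemma box_unique {t : Filling} (ht : IsSVT n (colShape k) t) {r r' a : ℕ}
    (ha : a ∈ t r 0) (ha' : a ∈ t r' 0) : r = r' := by
  rcases lt_trichotomy r r' with h | h | h
  · exact absurd (chain_lt' ht h ha ha') (lt_irrefl a)
  · exact h
  · exact absurd (chain_lt' ht h ha' ha) (lt_irrefl a)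

lemma entry_lower {t : Filling} (ht : IsSVT n (colShape k) t) :
    ∀ r a, a ∈ t r 0 → r + 1 ≤ a := by
  intro r
  induction r with
  | zero => intro a ha; exact (ht.entryBounds 0 0 a ha).1
  | succ r ih =>
      intro a ha
      have hr : r < k := by have := (mem_box_lt ht ha).2; omega
      obtain ⟨y, hy⟩ := box_nonempty ht hr
      have := ih y hy
      have := ht.colStrict r 0 y a hy ha
      omega

lemma colHas_iff {t : Filling} (ht : IsSVT n (colShape k) t) (hkn : k ≤ n) (a : ℕ) :
    colHas n t a 0 ↔ ∃ r, r < k ∧ a ∈ t r 0 := by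
  constructor
  · rintro ⟨r, hr, ha⟩
    exact ⟨r, (mem_box_lt ht ha).2, ha⟩
  · rintro ⟨r, hr, ha⟩
    exact ⟨r, by omega, ha⟩

end Column


section Ops

variable {n k : ℕ}

/-! #### Signature rule in one column -/

lemma colSign_true_iff {t : Filling} {i c : ℕ} :
    colSign n t i c = some true ↔ colHas n t i c ∧ ¬ colHas n t (i + 1) c := by
  unfold colSign
  split_ifs with h1 h2
  · simp [h1]
  · simp [h1]
  · simp [h1]

lemma colSign_false_iff {t : Filling} {i c : ℕ} :
    colSign n t i c = some false ↔ colHas n t (i + 1) c ∧ ¬ colHas n t i c := by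
  unfold colSign
  split_ifs with h1 h2
  · simp only [Option.some.injEq]
    constructor
    · intro h; exact absurd h (by simp)
    · intro h; exact absurd h1.1 h.2
  · simp [h2]
  · simp [h2]

lemma exists_eBoxCol_iff (hk1 : 1 ≤ k) (t : Filling) (i : ℕ) :
    (∃ c, eBoxCol n (colShape k 0) t i c) ↔ colSign n t i 0 = some false := by
  rw [colShape_zero hk1]
  constructor
  · rintro ⟨c, ⟨⟨hc, hs, _⟩, _⟩⟩
    have : c = 0 := by omega
    subst this; exact hs
  · intro hs
    exact ⟨0, ⟨⟨one_pos, hs, rfl⟩, fun c' _ => Nat.zero_le c'⟩⟩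

lemma exists_fBoxCol_iff (hk1 : 1 ≤ k) (t : Filling) (i : ℕ) :
    (∃ c, fBoxCol n (colShape k 0) t i c) ↔ colSign n t i 0 = some true := by
  rw [colShape_zero hk1]
  constructor
  · rintro ⟨c, ⟨⟨hc, hs, _⟩, _⟩⟩
    have : c = 0 := by omega
    subst this; exact hs
  · intro hs
    refine ⟨0, ⟨⟨one_pos, hs, rfl⟩, fun c' hc' => ?_⟩⟩
    have := hc'.1
    omega

/-! #### Computing the raw operators on one column -/

lemma eRaw_eq_none (hk1 : 1 ≤ k) {t : Filling} {i : ℕ}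
    (h : ¬ (colHas n t (i + 1) 0 ∧ ¬ colHas n t i 0)) :
    eRaw n (colShape k) i t = none := by
  unfold eRaw
  rw [dif_neg]
  rw [exists_eBoxCol_iff hk1, colSign_false_iff]
  exact h

lemma eRaw_eq_some (hk1 : 1 ≤ k) {t : Filling} {i ρ : ℕ}
    (hρn : ρ < n) (hmem : (i + 1) ∈ t ρ 0)
    (hcond : colHas n t (i + 1) 0 ∧ ¬ colHas n t i 0)
    (huniq : ∀ r, r < n → (i + 1) ∈ t r 0 → r = ρ) :
    eRaw n (colShape k) i t = some (updateBox t ρ 0 (insert i ((t ρ 0).erase (i + 1)))) := by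
  unfold eRaw
  split
  case isFalse hex =>
    exact absurd ((exists_eBoxCol_iff hk1 t i).mpr (colSign_false_iff.mpr hcond)) hex
  case isTrue hex =>
    have hc0 : Classical.choose hex = 0 := by
      have h1 := (Classical.choose_spec hex).1.1
      have h2 : colShape k 0 = 1 := colShape_zero hk1
      omega
    simp only [hc0]
    split
    case isFalse hr => exact absurd ⟨ρ, hρn, hmem⟩ hr
    case isTrue hr =>
      have hre : Classical.choose hr = ρ :=
        huniq _ (Classical.choose_spec hr).1 (Classical.choose_spec hr).2
      simp only [hre]
      rw [if_neg (by simp)]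

lemma fRaw_eq_none (hk1 : 1 ≤ k) {t : Filling} {i : ℕ}
    (h : ¬ (colHas n t i 0 ∧ ¬ colHas n t (i + 1) 0)) :
    fRaw n (colShape k) i t = none := by
  unfold fRaw
  rw [dif_neg]
  rw [exists_fBoxCol_iff hk1, colSign_true_iff]
  exact h

lemma fRaw_eq_some (hk1 : 1 ≤ k) {t : Filling} {i ρ : ℕ}
    (hρn : ρ < n) (hmem : i ∈ t ρ 0) (hno : i ∉ t ρ 1)
    (hcond : colHas n t i 0 ∧ ¬ colHas n t (i + 1) 0)
    (huniq : ∀ r, r < n → i ∈ t r 0 → r = ρ) :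
    fRaw n (colShape k) i t = some (updateBox t ρ 0 (insert (i + 1) ((t ρ 0).erase i))) := by
  unfold fRaw
  split
  case isFalse hex =>
    exact absurd ((exists_fBoxCol_iff hk1 t i).mpr (colSign_true_iff.mpr hcond)) hex
  case isTrue hex =>
    have hc0 : Classical.choose hex = 0 := by
      have h1 := (Classical.choose_spec hex).1.1
      have h2 : colShape k 0 = 1 := colShape_zero hk1
      omega
    simp only [hc0]
    split
    case isFalse hr => exact absurd ⟨ρ, hρn, hmem⟩ hr
    case isTrue hr =>
      have hre : Classical.choose hr = ρ :=
        huniq _ (Classical.choose_spec hr).1 (Classical.choose_spec hr).2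
      simp only [hre]
      rw [if_neg]
      exact fun hc => hno hc

lemma eK_eq_none_iff {t : Filling} {i : ℕ} :
    eK n (colShape k) i t = none ↔
      ¬ ∃ p : ℕ × ℕ, p.1 < n ∧ p.2 < colShape k p.1 ∧ i ∈ t p.1 p.2 ∧ (i + 1) ∈ t p.1 p.2 := by
  unfold eK
  split <;> rename_i h <;> simp [h]

lemma eK_eq_some {t : Filling} {i ρ : ℕ} (hρ : ρ < n) (hρk : ρ < k)
    (hi : i ∈ t ρ 0) (hi1 : (i + 1) ∈ t ρ 0)
    (huniq : ∀ p : ℕ × ℕ, p.1 < n → p.2 < colShape k p.1 → i ∈ t p.1 p.2 →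
      (i + 1) ∈ t p.1 p.2 → p = (ρ, 0)) :
    eK n (colShape k) i t = some (updateBox t ρ 0 ((t ρ 0).erase (i + 1))) := by
  unfold eK
  split
  case isTrue h =>
    have hs := Classical.choose_spec h
    have hp : Classical.choose h = (ρ, 0) := huniq _ hs.1 hs.2.1 hs.2.2.1 hs.2.2.2
    simp only [hp]
  case isFalse h =>
    refine absurd ⟨(ρ, 0), hρ, ?_, hi, hi1⟩ h
    rw [colShape_apply]; simp [hρk]

lemma fK_eq_none {t : Filling} {i : ℕ}
    (h : ¬ ((∃ p : ℕ × ℕ, KBoxF n (colShape k) t i p) ∧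
      ¬ containsEntry n (colShape k) t (i + 1))) :
    fK n (colShape k) i t = none := by
  unfold fK
  rw [dif_neg h]

lemma KBoxF_col {t : Filling} {i ρ : ℕ} (hρ : ρ < n) (hρk : ρ < k) (hi : i ∈ t ρ 0) :
    KBoxF n (colShape k) t i (ρ, 0) := by
  refine ⟨hρ, by rw [colShape_apply]; simp [hρk], hi, fun q hq1 hq2 _ => ?_⟩
  have : colShape k q.1 ≤ 1 := by rw [colShape_apply]; split <;> omega
  omega

lemma fK_eq_some {t : Filling} {i ρ : ℕ} (hρ : ρ < n) (hρk : ρ < k) (hi : i ∈ t ρ 0)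
    (hnc : ¬ containsEntry n (colShape k) t (i + 1))
    (huniq : ∀ p : ℕ × ℕ, KBoxF n (colShape k) t i p → p = (ρ, 0)) :
    fK n (colShape k) i t = some (updateBox t ρ 0 (insert (i + 1) (t ρ 0))) := by
  unfold fK
  split
  case isTrue h =>
    have hp : Classical.choose h.1 = (ρ, 0) := huniq _ (Classical.choose_spec h.1)
    simp only [hp]
  case isFalse h =>
    exact absurd ⟨⟨(ρ, 0), KBoxF_col hρ hρk hi⟩, hnc⟩ h

end Ops


section RstepSec

variable {n k : ℕ}

/-- Replace `j+1` by `j` in a box, if present. -/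
def swapIn (j : ℕ) (B : Finset ℕ) : Finset ℕ :=
  if j + 1 ∈ B then insert j (B.erase (j + 1)) else B

/-- Delete `j+1` from a box containing both `j` and `j+1`. -/
def delIn (j : ℕ) (B : Finset ℕ) : Finset ℕ :=
  if j ∈ B ∧ j + 1 ∈ B then B.erase (j + 1) else B

/-- The explicit combined Demazure step `(e_j^K)^max e_j^max` on a column tableau. -/
def Rstep (n j : ℕ) (t : Filling) : Filling :=
  if colHas n t (j + 1) 0 ∧ ¬ colHas n t j 0 then fun r c => swapIn j (t r c)
  else if ∃ r, r < n ∧ j ∈ t r 0 ∧ j + 1 ∈ t r 0 then fun r c => delIn j (t r c)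
  else t

lemma swapIn_nonempty {j : ℕ} {B : Finset ℕ} (h : B.Nonempty) : (swapIn j B).Nonempty := by
  unfold swapIn; split
  · exact ⟨j, Finset.mem_insert_self _ _⟩
  · exact h

lemma delIn_nonempty {j : ℕ} {B : Finset ℕ} (h : B.Nonempty) : (delIn j B).Nonempty := by
  unfold delIn; split
  case isTrue hB => exact ⟨j, Finset.mem_erase.mpr ⟨by omega, hB.1⟩⟩
  case isFalse => exact h

lemma swapIn_empty {j : ℕ} : swapIn j (∅ : Finset ℕ) = ∅ := by simp [swapIn]

lemma delIn_empty {j : ℕ} : delIn j (∅ : Finset ℕ) = ∅ := by simp [delIn]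

lemma delIn_subset {j : ℕ} {B : Finset ℕ} : delIn j B ⊆ B := by
  unfold delIn; split
  · exact Finset.erase_subset _ _
  · exact subset_rfl

lemma not_mem_swapIn {j : ℕ} {B : Finset ℕ} : j + 1 ∉ swapIn j B := by
  unfold swapIn; split
  case isTrue hB =>
    intro hc
    rcases Finset.mem_insert.mp hc with h | h
    · omega
    · exact (Finset.mem_erase.mp h).1 rfl
  case isFalse hB => exact hB

lemma hi_col_empty {t : Filling} (ht : IsSVT n (colShape k) t) {r c : ℕ} (hc : 1 ≤ c) :
    t r c = ∅ := by
  apply ht.emptyOutside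
  have : colShape k r ≤ 1 := by rw [colShape_apply]; split <;> omega
  omega

lemma isSVT_Rstep {t : Filling} (ht : IsSVT n (colShape k) t) (hkn : k ≤ n) {j : ℕ}
    (hj : 1 ≤ j) : IsSVT n (colShape k) (Rstep n j t) := by
  unfold Rstep
  split_ifs with h1 h2
  · -- swap case
    obtain ⟨ρ, hρn, hρmem⟩ := h1.1
    have hnoj : ∀ r c (x : ℕ), x ∈ t r c → x ≠ j := by
      intro r c x hx hxe
      subst hxe
      obtain ⟨hc0, hrk⟩ := mem_box_lt ht hx
      subst hc0
      exact h1.2 ⟨r, by omega, hx⟩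
    have key : ∀ r' c (x : ℕ), x ∈ swapIn j (t r' c) →
        (x ∈ t r' c ∧ x ≠ j) ∨ (x = j ∧ r' = ρ ∧ c = 0) := by
      intro r' c x hx
      unfold swapIn at hx
      split at hx
      case isTrue hB =>
        obtain ⟨hc0, hrk⟩ := mem_box_lt ht hB
        subst hc0
        have hr' : r' = ρ := box_unique ht hB hρmem
        rcases Finset.mem_insert.mp hx with h | h
        · exact Or.inr ⟨h, hr', rfl⟩
        · exact Or.inl ⟨(Finset.mem_erase.mp h).2, hnoj _ _ _ (Finset.mem_erase.mp h).2⟩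
      case isFalse hB => exact Or.inl ⟨hx, hnoj _ _ _ hx⟩
    constructor
    · intro r c hc; exact swapIn_nonempty (ht.boxNonempty r c hc)
    · intro r c hc; rw [ht.emptyOutside r c hc, swapIn_empty]
    · intro r c a ha
      rcases key r c a ha with ⟨ha', _⟩ | ⟨hae, hre, hce⟩
      · exact ht.entryBounds r c a ha'
      · have := ht.entryBounds ρ 0 (j + 1) hρmem
        omega
    · intro r c a b ha hb
      rw [hi_col_empty ht (by omega : 1 ≤ c + 1), swapIn_empty] at hb
      simp at hb
    · intro r c a b ha hb
      rcases key r c a ha with ⟨ha', hane⟩ | ⟨hae, hre, hce⟩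
      · rcases key (r + 1) c b hb with ⟨hb', _⟩ | ⟨hbe, hre2, hce2⟩
        · exact ht.colStrict r c a b ha' hb'
        · -- b = j, r + 1 = ρ; a ∈ t r 0, a ≠ j, a < j + 1
          subst hce2
          have : a < j + 1 := ht.colStrict r 0 a (j + 1) ha' (by rw [hre2]; exact hρmem)
          omega
      · -- a = j at (ρ, 0)
        rcases key (r + 1) c b hb with ⟨hb', _⟩ | ⟨hbe, hre2, hce2⟩
        · have : j + 1 < b :=
            ht.colStrict r c (j + 1) b (by rw [hre, hce]; exact hρmem) hb'
          omega
        · omega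
  · -- delete case
    constructor
    · intro r c hc; exact delIn_nonempty (ht.boxNonempty r c hc)
    · intro r c hc; rw [ht.emptyOutside r c hc, delIn_empty]
    · intro r c a ha; exact ht.entryBounds r c a (delIn_subset ha)
    · intro r c a b ha hb; exact ht.rowWeak r c a b (delIn_subset ha) (delIn_subset hb)
    · intro r c a b ha hb; exact ht.colStrict r c a b (delIn_subset ha) (delIn_subset hb)
  · exact ht

lemma iterOpt_one (g : Filling → Option Filling) (t : Filling) :
    iterOpt g 1 t = g t := rfl

lemma demStep_Rstep {t : Filling} (ht : IsSVT n (colShape k) t) (hk1 : 1 ≤ k) (hkn : k ≤ n)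
    {j : ℕ} (hj : 1 ≤ j) :
    DemStep n (colShape k) (eK n (colShape k)) j t (Rstep n j t) := by
  unfold Rstep
  split_ifs with h1 h2
  · -- swap case
    obtain ⟨ρ, hρn, hρmem⟩ := h1.1
    have hρk : ρ < k := (mem_box_lt ht hρmem).2
    have huniq : ∀ r, r < n → (j + 1) ∈ t r 0 → r = ρ := fun r _ hr => box_unique ht hr hρmem
    have he : eRaw n (colShape k) j t =
        some (updateBox t ρ 0 (insert j ((t ρ 0).erase (j + 1)))) :=
      eRaw_eq_some hk1 hρn hρmem h1 huniq
    have hup : updateBox t ρ 0 (insert j ((t ρ 0).erase (j + 1))) =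
        fun r c => swapIn j (t r c) := by
      funext r c
      unfold updateBox swapIn
      by_cases hrc : r = ρ ∧ c = 0
      · obtain ⟨rfl, rfl⟩ := hrc
        rw [if_pos ⟨rfl, rfl⟩, if_pos hρmem]
      · rw [if_neg hrc]
        split
        next hB =>
          obtain ⟨hc0, hrk⟩ := mem_box_lt ht hB
          subst hc0
          exact absurd ⟨box_unique ht hB hρmem, rfl⟩ hrc
        next => rfl
    set t1 : Filling := fun r c => swapIn j (t r c) with ht1
    have hno1 : ∀ r c, j + 1 ∉ t1 r c := by
      intro r c
      exact not_mem_swapIn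
    refine ⟨t1, ⟨⟨1, ?_⟩, ?_⟩, ⟨0, rfl⟩, ?_⟩
    · rw [iterOpt_one, he, hup]
    · apply eRaw_eq_none hk1
      rintro ⟨⟨r, hrn, hmem⟩, -⟩
      exact hno1 r 0 hmem
    · rw [eK_eq_none_iff]
      rintro ⟨p, -, -, -, hp2⟩
      exact hno1 p.1 p.2 hp2
  · -- delete case
    obtain ⟨ρ, hρn, hρj, hρj1⟩ := h2
    have hρk : ρ < k := (mem_box_lt ht hρj).2
    have henone : eRaw n (colShape k) j t = none :=
      eRaw_eq_none hk1 (fun hc => hc.2 ⟨ρ, hρn, hρj⟩)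
    have heK : eK n (colShape k) j t = some (updateBox t ρ 0 ((t ρ 0).erase (j + 1))) := by
      apply eK_eq_some hρn hρk hρj hρj1
      intro p hp1 hp2 hpj hpj1
      have hcs : colShape k p.1 ≤ 1 := by rw [colShape_apply]; split <;> omega
      have hp20 : p.2 = 0 := by omega
      rw [hp20] at hpj
      have : p.1 = ρ := box_unique ht hpj hρj
      exact Prod.ext this hp20
    have hup : updateBox t ρ 0 ((t ρ 0).erase (j + 1)) = fun r c => delIn j (t r c) := by
      funext r c
      unfold updateBox delIn
      by_cases hrc : r = ρ ∧ c = 0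
      · obtain ⟨rfl, rfl⟩ := hrc
        rw [if_pos ⟨rfl, rfl⟩, if_pos ⟨hρj, hρj1⟩]
      · rw [if_neg hrc]
        split
        next hB =>
          obtain ⟨hc0, hrk⟩ := mem_box_lt ht hB.2
          subst hc0
          exact absurd ⟨box_unique ht hB.2 hρj1, rfl⟩ hrc
        next => rfl
    set t2 : Filling := fun r c => delIn j (t r c) with ht2
    refine ⟨t, ⟨⟨0, rfl⟩, henone⟩, ⟨1, ?_⟩, ?_⟩
    · rw [iterOpt_one, heK, hup]
    · rw [eK_eq_none_iff]
      rintro ⟨p, hp1, hp2, hpj, hpj1⟩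
      have hmem : j + 1 ∈ t p.1 p.2 := delIn_subset hpj1
      obtain ⟨hc0, hrk⟩ := mem_box_lt ht hmem
      rw [hc0] at hmem hpj1
      have hp1ρ : p.1 = ρ := box_unique ht hmem hρj1
      rw [hp1ρ] at hpj1
      have hd : j + 1 ∈ delIn j (t ρ 0) := hpj1
      unfold delIn at hd
      rw [if_pos ⟨hρj, hρj1⟩] at hd
      exact (Finset.mem_erase.mp hd).1 rfl
  · -- trivial case
    have henone : eRaw n (colShape k) j t = none := eRaw_eq_none hk1 h1
    have heKnone : eK n (colShape k) j t = none := by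
      rw [eK_eq_none_iff]
      rintro ⟨p, hp1, hp2, hpj, hpj1⟩
      have hcs : colShape k p.1 ≤ 1 := by rw [colShape_apply]; split <;> omega
      have hp20 : p.2 = 0 := by omega
      rw [hp20] at hpj hpj1
      exact h2 ⟨p.1, hp1, hpj, hpj1⟩
    exact ⟨t, ⟨⟨0, rfl⟩, henone⟩, ⟨0, rfl⟩, heKnone⟩

lemma demStep_unique {lam : ℕ → ℕ} {eKop : ℕ → Filling → Option Filling} {j : ℕ}
    {t a b : Filling} (ha : DemStep n lam eKop j t a) (hb : DemStep n lam eKop j t b) :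
    a = b := by
  obtain ⟨t1, h1, h2⟩ := ha
  obtain ⟨t1', h1', h2'⟩ := hb
  have := maxApply_unique h1 h1'
  subst this
  exact maxApply_unique h2 h2'

lemma demStep_iff {t : Filling} (ht : IsSVT n (colShape k) t) (hk1 : 1 ≤ k) (hkn : k ≤ n)
    {j : ℕ} (hj : 1 ≤ j) (t2 : Filling) :
    DemStep n (colShape k) (eK n (colShape k)) j t t2 ↔ t2 = Rstep n j t := by
  constructor
  · intro h; exact demStep_unique h (demStep_Rstep ht hk1 hkn hj)
  · rintro rfl; exact demStep_Rstep ht hk1 hkn hj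

end RstepSec


section PhiSec

variable {n k : ℕ}

/-- Number of elements of `I` smaller than `x`. -/
def nuF (I : Finset ℕ) (x : ℕ) : ℕ := (I.filter (fun y => y < x)).card

/-- The flag condition: every entry of box `r` is at most the `(r+1)`-st smallest
element of `I`. -/
def phiF (k : ℕ) (I : Finset ℕ) (t : Filling) : Prop :=
  ∀ r, r < k → ∀ x ∈ t r 0, nuF I x ≤ r

/-- One-step update of the index set. -/
def sigmaF (j : ℕ) (I : Finset ℕ) : Finset ℕ :=
  if j ∈ I ∧ j + 1 ∉ I then insert (j + 1) (I.erase j) else I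

/-- The index set associated with a word. -/
def Jset (k : ℕ) : List ℕ → Finset ℕ
  | [] => Finset.Icc 1 k
  | j :: v => sigmaF j (Jset k v)

lemma nuF_mono (I : Finset ℕ) {x y : ℕ} (h : x ≤ y) : nuF I x ≤ nuF I y := by
  apply Finset.card_le_card
  intro a ha
  simp only [Finset.mem_filter] at ha ⊢
  exact ⟨ha.1, by omega⟩

lemma nuF_succ_mem {I : Finset ℕ} {j : ℕ} (hj : j ∈ I) : nuF I (j + 1) = nuF I j + 1 := by
  unfold nuF
  have he : I.filter (fun y => y < j + 1) = insert j (I.filter (fun y => y < j)) := by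
    ext y
    simp only [Finset.mem_filter, Finset.mem_insert]
    constructor
    · rintro ⟨hy, hlt⟩
      rcases (by omega : y = j ∨ y < j) with h | h
      · exact Or.inl h
      · exact Or.inr ⟨hy, h⟩
    · rintro (rfl | ⟨hy, hlt⟩)
      · exact ⟨hj, by omega⟩
      · exact ⟨hy, by omega⟩
  rw [he, Finset.card_insert_of_notMem (by simp)]

lemma nuF_succ_not_mem {I : Finset ℕ} {j : ℕ} (hj : j ∉ I) : nuF I (j + 1) = nuF I j := by
  unfold nuF
  congr 1
  ext y
  simp only [Finset.mem_filter]
  constructor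
  · rintro ⟨hy, hlt⟩
    refine ⟨hy, ?_⟩
    rcases (by omega : y < j ∨ y = j) with h | rfl
    · exact h
    · exact absurd hy hj
  · rintro ⟨hy, hlt⟩
    exact ⟨hy, by omega⟩

lemma nuF_lt_card {I : Finset ℕ} {a : ℕ} (ha : a ∈ I) : nuF I a < I.card := by
  apply Finset.card_lt_card
  rw [Finset.ssubset_iff_of_subset (Finset.filter_subset _ _)]
  exact ⟨a, ha, by simp⟩

lemma nuF_swap_ne {I : Finset ℕ} {j x : ℕ} (hj : j ∈ I) (hj1 : j + 1 ∉ I) (hx : x ≠ j + 1) :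
    nuF (insert (j + 1) (I.erase j)) x = nuF I x := by
  unfold nuF
  rcases le_or_gt x j with h | h
  · congr 1
    ext y
    simp only [Finset.mem_filter, Finset.mem_insert, Finset.mem_erase]
    constructor
    · rintro ⟨hmem, hlt⟩
      rcases hmem with rfl | ⟨hne, hy⟩
      · omega
      · exact ⟨hy, hlt⟩
    · rintro ⟨hy, hlt⟩
      exact ⟨Or.inr ⟨by omega, hy⟩, hlt⟩
  · have hx2 : j + 2 ≤ x := by omega
    have he : (insert (j + 1) (I.erase j)).filter (fun y => y < x) =
        insert (j + 1) ((I.filter (fun y => y < x)).erase j) := by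
      ext y
      simp only [Finset.mem_filter, Finset.mem_insert, Finset.mem_erase]
      constructor
      · rintro ⟨hmem, hlt⟩
        rcases hmem with rfl | ⟨hne, hy⟩
        · exact Or.inl rfl
        · exact Or.inr ⟨hne, hy, hlt⟩
      · rintro (rfl | ⟨hne, hy, hlt⟩)
        · exact ⟨Or.inl rfl, by omega⟩
        · exact ⟨Or.inr ⟨hne, hy⟩, hlt⟩
    have hjf : j ∈ I.filter (fun y => y < x) := Finset.mem_filter.mpr ⟨hj, by omega⟩
    have hpos : 0 < (I.filter (fun y => y < x)).card := Finset.card_pos.mpr ⟨j, hjf⟩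
    rw [he, Finset.card_insert_of_notMem (by simp [hj1]), Finset.card_erase_of_mem hjf]
    omega

lemma nuF_swap_eq {I : Finset ℕ} {j : ℕ} (hj : j ∈ I) (hj1 : j + 1 ∉ I) :
    nuF (insert (j + 1) (I.erase j)) (j + 1) = nuF I j := by
  unfold nuF
  congr 1
  ext y
  simp only [Finset.mem_filter, Finset.mem_insert, Finset.mem_erase]
  constructor
  · rintro ⟨hmem, hlt⟩
    rcases hmem with rfl | ⟨hne, hy⟩
    · omega
    · exact ⟨hy, by omega⟩
  · rintro ⟨hy, hlt⟩
    exact ⟨Or.inr ⟨by omega, hy⟩, by omega⟩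

lemma crux {I : Finset ℕ} {j ρ : ℕ} (hI : I.card = k) (hjI : j ∈ I) (hj1I : j + 1 ∈ I)
    (hρk : ρ < k) (hnuj : nuF I j ≤ ρ)
    (hnext : ρ + 1 < k → ∃ y, j + 2 ≤ y ∧ nuF I y ≤ ρ + 1) :
    nuF I (j + 1) ≤ ρ := by
  rw [nuF_succ_mem hjI]
  by_contra hcon
  have hnujρ : nuF I j = ρ := by omega
  by_cases hk' : ρ + 1 < k
  · obtain ⟨y, hy2, hyν⟩ := hnext hk'
    have hm : nuF I (j + 1 + 1) ≤ nuF I y := nuF_mono I (by omega)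
    have h2 : nuF I (j + 1 + 1) = nuF I (j + 1) + 1 := nuF_succ_mem hj1I
    have h1 : nuF I (j + 1) = nuF I j + 1 := nuF_succ_mem hjI
    omega
  · have hlt : nuF I (j + 1) < I.card := nuF_lt_card hj1I
    have h1 : nuF I (j + 1) = nuF I j + 1 := nuF_succ_mem hjI
    omega

lemma mem_swapIn {j x : ℕ} {B : Finset ℕ} (hB : j + 1 ∈ B) :
    x ∈ swapIn j B ↔ x = j ∨ (x ∈ B ∧ x ≠ j + 1) := by
  unfold swapIn
  rw [if_pos hB]
  simp only [Finset.mem_insert, Finset.mem_erase]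
  constructor
  · rintro (rfl | ⟨hne, hy⟩)
    · exact Or.inl rfl
    · exact Or.inr ⟨hy, hne⟩
  · rintro (rfl | ⟨hy, hne⟩)
    · exact Or.inl rfl
    · exact Or.inr ⟨hne, hy⟩

lemma swapIn_eq_self {j : ℕ} {B : Finset ℕ} (hB : j + 1 ∉ B) : swapIn j B = B := if_neg hB

lemma delIn_eq {j : ℕ} {B : Finset ℕ} (h : j ∈ B ∧ j + 1 ∈ B) :
    delIn j B = B.erase (j + 1) := if_pos h

lemma delIn_eq_self {j : ℕ} {B : Finset ℕ} (h : ¬ (j ∈ B ∧ j + 1 ∈ B)) : delIn j B = B :=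
  if_neg h

theorem step_claim {t : Filling} (ht : IsSVT n (colShape k) t) (hkn : k ≤ n)
    {I : Finset ℕ} (hI : I.card = k) (j : ℕ) :
    phiF k I (Rstep n j t) ↔ phiF k (sigmaF j I) t := by
  unfold Rstep
  split_ifs with h1 h2
  · -- SWAP CASE
    obtain ⟨ρ, hρn, hρmem⟩ := h1.1
    have hρk : ρ < k := (mem_box_lt ht hρmem).2
    have huniq1 : ∀ r x, x = j + 1 → x ∈ t r 0 → r = ρ := by
      rintro r x rfl hx; exact box_unique ht hx hρmem
    have hnoj : ∀ r (x : ℕ), x ∈ t r 0 → x ≠ j := by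
      intro r x hx hxe
      subst hxe
      have hrk := (mem_box_lt ht hx).2
      exact h1.2 ⟨r, by omega, hx⟩
    have hmemswap : ∀ r (x : ℕ), x ∈ t r 0 → x ≠ j + 1 → x ∈ swapIn j (t r 0) := by
      intro r x hx hne
      by_cases hm : j + 1 ∈ t r 0
      · rw [mem_swapIn hm]; exact Or.inr ⟨hx, hne⟩
      · rw [swapIn_eq_self hm]; exact hx
    by_cases hIj : j ∈ I ∧ j + 1 ∉ I
    · unfold sigmaF
      rw [if_pos hIj]
      constructor
      · intro h r hr x hx
        by_cases hxe : x = j + 1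
        · subst hxe
          have hrρ : r = ρ := huniq1 r _ rfl hx
          rw [hrρ, nuF_swap_eq hIj.1 hIj.2]
          have hjmem : j ∈ swapIn j (t ρ 0) := by
            rw [mem_swapIn hρmem]; exact Or.inl rfl
          exact h ρ hρk j hjmem
        · rw [nuF_swap_ne hIj.1 hIj.2 hxe]
          exact h r hr x (hmemswap r x hx hxe)
      · intro h r hr x hx
        have hx' : x ∈ swapIn j (t r 0) := hx
        by_cases hm : j + 1 ∈ t r 0
        · rw [mem_swapIn hm] at hx'
          rcases hx' with hxj | ⟨hxt, hne⟩
          · have hrρ : r = ρ := huniq1 r _ rfl hm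
            rw [hxj, hrρ, ← nuF_swap_eq hIj.1 hIj.2]
            exact h ρ hρk (j + 1) (hrρ ▸ hm)
          · rw [← nuF_swap_ne hIj.1 hIj.2 hne]
            exact h r hr x hxt
        · rw [swapIn_eq_self hm] at hx'
          have hne : x ≠ j + 1 := fun he => hm (he ▸ hx')
          rw [← nuF_swap_ne hIj.1 hIj.2 hne]
          exact h r hr x hx'
    · unfold sigmaF
      rw [if_neg hIj]
      constructor
      · intro h r hr x hx
        by_cases hxe : x = j + 1
        · subst hxe
          have hrρ : r = ρ := huniq1 r _ rfl hx
          rw [hrρ]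
          have hjmem : j ∈ swapIn j (t ρ 0) := by
            rw [mem_swapIn hρmem]; exact Or.inl rfl
          have hnuj : nuF I j ≤ ρ := h ρ hρk j hjmem
          by_cases hjI' : j ∈ I
          · have hj1I' : j + 1 ∈ I := by
              by_contra hc; exact hIj ⟨hjI', hc⟩
            apply crux hI hjI' hj1I' hρk hnuj
            intro hk'
            obtain ⟨y, hy⟩ := box_nonempty ht hk'
            have hygt : j + 1 < y := chain_lt' ht (by omega) hρmem hy
            refine ⟨y, by omega, ?_⟩
            have hyne : y ≠ j + 1 := by omega
            exact h (ρ + 1) hk' y (hmemswap _ y hy hyne)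
          · rw [nuF_succ_not_mem hjI']
            exact hnuj
        · exact h r hr x (hmemswap r x hx hxe)
      · intro h r hr x hx
        have hx' : x ∈ swapIn j (t r 0) := hx
        by_cases hm : j + 1 ∈ t r 0
        · rw [mem_swapIn hm] at hx'
          rcases hx' with hxj | ⟨hxt, hne⟩
          · have hrρ : r = ρ := huniq1 r _ rfl hm
            rw [hxj, hrρ]
            calc nuF I j ≤ nuF I (j + 1) := nuF_mono I (by omega)
              _ ≤ ρ := h ρ hρk (j + 1) (hrρ ▸ hm)
          · exact h r hr x hxt
        · rw [swapIn_eq_self hm] at hx'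
          exact h r hr x hx'
  · -- DELETE CASE
    obtain ⟨ρ, hρn, hρj, hρj1⟩ := h2
    have hρk : ρ < k := (mem_box_lt ht hρj).2
    have huniq1 : ∀ r, j + 1 ∈ t r 0 → r = ρ := fun r hx => box_unique ht hx hρj1
    have hdel : ∀ r, r ≠ ρ → delIn j (t r 0) = t r 0 := by
      intro r hne
      apply delIn_eq_self
      rintro ⟨-, hm⟩
      exact hne (huniq1 r hm)
    have hdelρ : delIn j (t ρ 0) = (t ρ 0).erase (j + 1) := delIn_eq ⟨hρj, hρj1⟩
    have hmemdel : ∀ r (x : ℕ), x ∈ t r 0 → x ≠ j + 1 → x ∈ delIn j (t r 0) := by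
      intro r x hx hne
      by_cases hrρ : r = ρ
      · subst hrρ; rw [hdelρ]; exact Finset.mem_erase.mpr ⟨hne, hx⟩
      · rw [hdel r hrρ]; exact hx
    have hjdel : j ∈ delIn j (t ρ 0) := by
      rw [hdelρ]; exact Finset.mem_erase.mpr ⟨by omega, hρj⟩
    by_cases hIj : j ∈ I ∧ j + 1 ∉ I
    · unfold sigmaF
      rw [if_pos hIj]
      constructor
      · intro h r hr x hx
        by_cases hxe : x = j + 1
        · subst hxe
          have hrρ : r = ρ := huniq1 r hx
          rw [hrρ, nuF_swap_eq hIj.1 hIj.2]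
          exact h ρ hρk j hjdel
        · rw [nuF_swap_ne hIj.1 hIj.2 hxe]
          exact h r hr x (hmemdel r x hx hxe)
      · intro h r hr x hx
        have hx' : x ∈ delIn j (t r 0) := hx
        have hxt : x ∈ t r 0 := delIn_subset hx'
        have hne : x ≠ j + 1 := by
          intro he
          subst he
          have hrρ : r = ρ := huniq1 r hxt
          rw [hrρ, hdelρ] at hx'
          exact (Finset.mem_erase.mp hx').1 rfl
        rw [← nuF_swap_ne hIj.1 hIj.2 hne]
        exact h r hr x hxt
    · unfold sigmaF
      rw [if_neg hIj]
      constructor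
      · intro h r hr x hx
        by_cases hxe : x = j + 1
        · subst hxe
          have hrρ : r = ρ := huniq1 r hx
          rw [hrρ]
          have hnuj : nuF I j ≤ ρ := h ρ hρk j hjdel
          by_cases hjI' : j ∈ I
          · have hj1I' : j + 1 ∈ I := by
              by_contra hc; exact hIj ⟨hjI', hc⟩
            apply crux hI hjI' hj1I' hρk hnuj
            intro hk'
            obtain ⟨y, hy⟩ := box_nonempty ht hk'
            have hygt : j + 1 < y := chain_lt' ht (by omega) hρj1 hy
            refine ⟨y, by omega, ?_⟩
            exact h (ρ + 1) hk' y (hmemdel _ y hy (by omega))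
          · rw [nuF_succ_not_mem hjI']
            exact hnuj
        · exact h r hr x (hmemdel r x hx hxe)
      · intro h r hr x hx
        exact h r hr x (delIn_subset hx)
  · -- TRIVIAL CASE
    by_cases hIj : j ∈ I ∧ j + 1 ∉ I
    · unfold sigmaF
      rw [if_pos hIj]
      by_cases hHj1 : colHas n t (j + 1) 0
      · obtain ⟨ρ1, hρ1n, hρ1m⟩ := hHj1
        have hρ1k : ρ1 < k := (mem_box_lt ht hρ1m).2
        have hHj : colHas n t j 0 := by
          by_contra hc
          exact h1 ⟨⟨ρ1, hρ1n, hρ1m⟩, hc⟩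
        obtain ⟨ρj, hρjn, hρjm⟩ := hHj
        have hρjk : ρj < k := (mem_box_lt ht hρjm).2
        have hρne : ρj ≠ ρ1 := by
          intro he
          exact h2 ⟨ρj, hρjn, hρjm, he ▸ hρ1m⟩
        have hρlt : ρj < ρ1 := by
          rcases lt_trichotomy ρj ρ1 with h | h | h
          · exact h
          · exact absurd h hρne
          · have := chain_lt' ht h hρ1m hρjm
            omega
        have huniq1 : ∀ r, j + 1 ∈ t r 0 → r = ρ1 := fun r hx => box_unique ht hx hρ1m
        constructor
        · intro h r hr x hx
          by_cases hxe : x = j + 1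
          · subst hxe
            have hrρ : r = ρ1 := huniq1 r hx
            rw [hrρ, nuF_swap_eq hIj.1 hIj.2]
            have := h ρj hρjk j hρjm
            omega
          · rw [nuF_swap_ne hIj.1 hIj.2 hxe]
            exact h r hr x hx
        · intro h r hr x hx
          by_cases hxe : x = j + 1
          · subst hxe
            have hrρ : r = ρ1 := huniq1 r hx
            have hnuj : nuF I j ≤ ρj := by
              rw [← nuF_swap_ne hIj.1 hIj.2 (by omega : j ≠ j + 1)]
              exact h ρj hρjk j hρjm
            rw [hrρ, nuF_succ_mem hIj.1]
            omega
          · rw [← nuF_swap_ne hIj.1 hIj.2 hxe]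
            exact h r hr x hx
      · have hne : ∀ r (x : ℕ), r < k → x ∈ t r 0 → x ≠ j + 1 := by
          intro r x hr hx he
          exact hHj1 ⟨r, by omega, he ▸ hx⟩
        constructor
        · intro h r hr x hx
          rw [nuF_swap_ne hIj.1 hIj.2 (hne r x hr hx)]
          exact h r hr x hx
        · intro h r hr x hx
          rw [← nuF_swap_ne hIj.1 hIj.2 (hne r x hr hx)]
          exact h r hr x hx
    · unfold sigmaF
      rw [if_neg hIj]

end PhiSec


section CharSec

variable {n k : ℕ}

lemma Jset_card : ∀ v : List ℕ, (Jset k v).card = k := by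
  intro v
  induction v with
  | nil => show (Finset.Icc 1 k).card = k; rw [Nat.card_Icc]; omega
  | cons j v ih =>
      show (sigmaF j (Jset k v)).card = k
      unfold sigmaF
      split_ifs with h
      · have h1 : j + 1 ∉ (Jset k v).erase j := fun hc => h.2 (Finset.mem_of_mem_erase hc)
        have hpos : 0 < (Jset k v).card := Finset.card_pos.mpr ⟨j, h.1⟩
        rw [Finset.card_insert_of_notMem h1, Finset.card_erase_of_mem h.1, ih]
        rw [ih] at hpos
        omega
      · exact ih

lemma nuF_Icc_le {x r : ℕ} (hx : x ≤ r + 1) : nuF (Finset.Icc 1 k) x ≤ r := by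
  unfold nuF
  have hsub : (Finset.Icc 1 k).filter (fun y => y < x) ⊆ Finset.Icc 1 r := by
    intro y hy
    simp only [Finset.mem_filter, Finset.mem_Icc] at hy ⊢
    omega
  calc ((Finset.Icc 1 k).filter (fun y => y < x)).card ≤ (Finset.Icc 1 r).card :=
        Finset.card_le_card hsub
    _ = r := by rw [Nat.card_Icc]; omega

lemma nuF_Icc_ge {x r : ℕ} (hr : r < k) (hx : r + 2 ≤ x) :
    r + 1 ≤ nuF (Finset.Icc 1 k) x := by
  unfold nuF
  have hsub : Finset.Icc 1 (r + 1) ⊆ (Finset.Icc 1 k).filter (fun y => y < x) := by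
    intro y hy
    simp only [Finset.mem_filter, Finset.mem_Icc] at hy ⊢
    omega
  calc r + 1 = (Finset.Icc 1 (r + 1)).card := by rw [Nat.card_Icc]; omega
    _ ≤ _ := Finset.card_le_card hsub

lemma uTab_box (hr : r < k) : uTab (colShape k) r 0 = {r + 1} := by
  unfold uTab
  rw [if_pos]
  rw [colShape_apply, if_pos hr]
  omega

lemma phi_base {t : Filling} (ht : IsSVT n (colShape k) t) (hk1 : 1 ≤ k) (hkn : k ≤ n) :
    phiF k (Finset.Icc 1 k) t ↔ t = uTab (colShape k) := by
  constructor
  · intro h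
    funext r c
    by_cases hc : c < colShape k r
    · have hrk : r < k := by
        rw [colShape_apply] at hc
        by_contra hcon
        rw [if_neg hcon] at hc
        omega
      have hc0 : c = 0 := by
        rw [colShape_apply, if_pos hrk] at hc
        omega
      subst hc0
      rw [uTab_box hrk]
      apply Finset.eq_singleton_iff_unique_mem.mpr
      have huniq : ∀ x ∈ t r 0, x = r + 1 := by
        intro x hx
        have hlow : r + 1 ≤ x := entry_lower ht r x hx
        by_contra hne
        have hx2 : r + 2 ≤ x := by omega
        have := nuF_Icc_ge (k := k) hrk hx2
        have := h r hrk x hx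
        omega
      obtain ⟨y, hy⟩ := box_nonempty ht hrk
      exact ⟨huniq y hy ▸ hy, huniq⟩
    · rw [ht.emptyOutside r c hc]
      unfold uTab
      rw [if_neg hc]
  · rintro rfl
    intro r hr x hx
    rw [uTab_box hr] at hx
    simp only [Finset.mem_singleton] at hx
    subst hx
    exact nuF_Icc_le le_rfl

theorem dem_char (hk1 : 1 ≤ k) (hkn : k ≤ n) :
    ∀ v : List ℕ, (∀ j ∈ v, 1 ≤ j) → ∀ t : Filling, IsSVT n (colShape k) t →
      (DemReach n (colShape k) (eK n (colShape k)) v t (uTab (colShape k)) ↔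
        phiF k (Jset k v) t) := by
  intro v
  induction v with
  | nil =>
      intro _ t ht
      show t = uTab (colShape k) ↔ _
      exact (phi_base ht hk1 hkn).symm
  | cons j v ih =>
      intro hlet t ht
      have hj : 1 ≤ j := hlet j List.mem_cons_self
      have hlet' : ∀ a ∈ v, 1 ≤ a := fun a ha => hlet a (List.mem_cons_of_mem j ha)
      have hsvt2 := isSVT_Rstep ht hkn hj
      constructor
      · rintro ⟨t2, hstep, hreach⟩
        have ht2 : t2 = Rstep n j t := (demStep_iff ht hk1 hkn hj t2).mp hstep
        subst ht2
        have hphi := (ih hlet' _ hsvt2).mp hreach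
        exact (step_claim ht hkn (Jset_card v) j).mp hphi
      · intro hphi
        refine ⟨Rstep n j t, demStep_Rstep ht hk1 hkn hj, ?_⟩
        exact (ih hlet' _ hsvt2).mpr ((step_claim ht hkn (Jset_card v) j).mpr hphi)

lemma updateBox_same (t : Filling) (r c : ℕ) (A : Finset ℕ) : updateBox t r c A r c = A :=
  if_pos ⟨rfl, rfl⟩

lemma updateBox_ne (t : Filling) (r c : ℕ) (A : Finset ℕ) {r' c' : ℕ}
    (h : ¬ (r' = r ∧ c' = c)) : updateBox t r c A r' c' = t r' c' := if_neg h

lemma isSVT_insert_succ {b : Filling} (hb : IsSVT n (colShape k) b) (hkn : k ≤ n)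
    {i ρ : ℕ} (hin : i < n) (hρm : i ∈ b ρ 0) (hH1 : ¬ colHas n b (i + 1) 0)
    {B : Finset ℕ}
    (hBsub : ∀ x ∈ B, x = i + 1 ∨ x ∈ b ρ 0) (hBne : (i + 1) ∈ B) :
    IsSVT n (colShape k) (updateBox b ρ 0 B) := by
  have hρk : ρ < k := (mem_box_lt hb hρm).2
  have hmemchar : ∀ r c (x : ℕ), x ∈ updateBox b ρ 0 B r c →
      x ∈ b r c ∨ (x = i + 1 ∧ r = ρ ∧ c = 0) := by
    intro r c x hx
    by_cases hrc : r = ρ ∧ c = 0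
    · obtain ⟨rfl, rfl⟩ := hrc
      rw [updateBox_same] at hx
      rcases hBsub x hx with h | h
      · exact Or.inr ⟨h, rfl, rfl⟩
      · exact Or.inl h
    · rw [updateBox_ne _ _ _ _ hrc] at hx
      exact Or.inl hx
  have hno1 : ∀ r (x : ℕ), x ∈ b r 0 → x ≠ i + 1 := by
    intro r x hx he
    subst he
    have := (mem_box_lt hb hx).2
    exact hH1 ⟨r, by omega, hx⟩
  constructor
  · intro r c hc
    by_cases hrc : r = ρ ∧ c = 0
    · obtain ⟨rfl, rfl⟩ := hrc
      rw [updateBox_same]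
      exact ⟨i + 1, hBne⟩
    · rw [updateBox_ne _ _ _ _ hrc]
      exact hb.boxNonempty r c hc
  · intro r c hc
    by_cases hrc : r = ρ ∧ c = 0
    · obtain ⟨rfl, rfl⟩ := hrc
      exfalso
      apply hc
      rw [colShape_apply, if_pos hρk]
      omega
    · rw [updateBox_ne _ _ _ _ hrc]
      exact hb.emptyOutside r c hc
  · intro r c a ha
    rcases hmemchar r c a ha with h | ⟨rfl, -, -⟩
    · exact hb.entryBounds r c a h
    · omega
  · intro r c a a' ha ha'
    exfalso
    have : updateBox b ρ 0 B r (c + 1) = b r (c + 1) :=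
      updateBox_ne _ _ _ _ (fun h => by omega)
    rw [this, hi_col_empty hb (by omega : 1 ≤ c + 1)] at ha'
    simp at ha'
  · intro r c a a' ha ha'
    rcases hmemchar r c a ha with hna | ⟨hae, hre, hce⟩
    · rcases hmemchar (r + 1) c a' ha' with hna' | ⟨hae', hre', hce'⟩
      · exact hb.colStrict r c a a' hna hna'
      · have : a < i := hb.colStrict r 0 a i (hce' ▸ hna) (by rw [hre']; exact hρm)
        omega
    · rcases hmemchar (r + 1) c a' ha' with hna' | ⟨hae', hre', hce'⟩
      · have h1 : i < a' := hb.colStrict r c i a' (by rw [hre, hce]; exact hρm) hna'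
        have h2 : a' ≠ i + 1 := by
          have hc0 : c = 0 := (mem_box_lt hb hna').1
          exact hno1 (r + 1) a' (hc0 ▸ hna')
        omega
      · omega

end CharSec

/-- for the one-column shape `(1ᵏ)`, let `b` satisfy `e_i b = 0` and
`e_i^K b = 0`, and let `S` be the `i`-K-string through `b` (all nonzero `f_iᵐ b` and
`f_iᵐ f_i^K b`).  Then for every reduced word of every `w ∈ Sₙ`, the intersection of the
K-Demazure crystal with `S` is empty, all of `S`, or the singleton `{b}`. -/
theorem kdem_column_strings (n k i : ℕ) (hn : 2 ≤ n) (hk1 : 1 ≤ k) (hkn : k ≤ n)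
    (hi1 : 1 ≤ i) (hin : i < n) (b : Filling) (hb : IsSVT n (colShape k) b)
    (hhw : eRaw n (colShape k) i b = none) (hhwK : eK n (colShape k) i b = none) :
    ∀ (w : Equiv.Perm ℕ) (word : List ℕ), IsReducedWord n w word →
      ∀ S : Set Filling,
        S = {t | (∃ m, iterOpt (fRaw n (colShape k) i) m b = some t) ∨
              ∃ t1, fK n (colShape k) i b = some t1 ∧
                ∃ m, iterOpt (fRaw n (colShape k) i) m t1 = some t} →
        (KDem n (colShape k) (eK n (colShape k)) word ∩ S = ∅ ∨
         KDem n (colShape k) (eK n (colShape k)) word ∩ S = S ∨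
         KDem n (colShape k) (eK n (colShape k)) word ∩ S = {b}) := by
  intro w word hred S hS
  have hlet1 : ∀ j ∈ word, 1 ≤ j := fun j hj => (hred.1 j hj).1
  have hchar : ∀ t : Filling, IsSVT n (colShape k) t →
      (t ∈ KDem n (colShape k) (eK n (colShape k)) word ↔ phiF k (Jset k word) t) := by
    intro t ht
    constructor
    · rintro ⟨-, hreach⟩
      exact (dem_char hk1 hkn word hlet1 t ht).mp hreach
    · intro hphi
      exact ⟨ht, (dem_char hk1 hkn word hlet1 t ht).mpr hphi⟩
  have singleton_case : fRaw n (colShape k) i b = none → fK n (colShape k) i b = none →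
      (KDem n (colShape k) (eK n (colShape k)) word ∩ S = ∅ ∨
       KDem n (colShape k) (eK n (colShape k)) word ∩ S = S ∨
       KDem n (colShape k) (eK n (colShape k)) word ∩ S = {b}) := by
    intro hf0 hfK0
    have hSb : S = {b} := by
      rw [hS]
      ext x
      simp only [Set.mem_setOf_eq, Set.mem_singleton_iff]
      constructor
      · rintro (⟨m, hm⟩ | ⟨t1, ht1, -⟩)
        · exact iterOpt_fixed _ b hf0 m x hm
        · rw [hfK0] at ht1; exact absurd ht1 (by simp)
      · rintro rfl
        exact Or.inl ⟨0, rfl⟩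
    rw [hSb]
    by_cases hphib : phiF k (Jset k word) b
    · right; right
      ext x
      constructor
      · rintro ⟨-, hx⟩; exact hx
      · intro hx
        have hxb : x = b := hx
        rw [hxb]
        exact ⟨(hchar b hb).mpr hphib, rfl⟩
    · left
      rw [Set.eq_empty_iff_forall_notMem]
      rintro x ⟨hK, hxb⟩
      have hxb' : x = b := hxb
      rw [hxb'] at hK
      exact hphib ((hchar b hb).mp hK)
  by_cases hH1 : colHas n b (i + 1) 0
  · -- `i+1` occurs in `b`: the string is `{b}`
    apply singleton_case
    · exact fRaw_eq_none hk1 (fun hc => hc.2 hH1)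
    · apply fK_eq_none
      rintro ⟨-, hnc⟩
      apply hnc
      obtain ⟨r, hrn, hmem⟩ := hH1
      have hrk : r < k := (mem_box_lt hb hmem).2
      exact ⟨r, 0, hrn, by rw [colShape_apply, if_pos hrk]; omega, hmem⟩
  · by_cases hHi : colHas n b i 0
    · -- the genuine string case
      have hHi' := hHi
      obtain ⟨ρ, hρn, hρm⟩ := hHi'
      have hρk : ρ < k := (mem_box_lt hb hρm).2
      have huq : ∀ r, r < n → i ∈ b r 0 → r = ρ := fun r _ h => box_unique hb h hρm
      set fb := updateBox b ρ 0 (insert (i + 1) ((b ρ 0).erase i)) with hfb_def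
      set fKb := updateBox b ρ 0 (insert (i + 1) (b ρ 0)) with hfKb_def
      have hno_b1 : i ∉ b ρ 1 := by rw [hi_col_empty hb le_rfl]; simp
      have hf : fRaw n (colShape k) i b = some fb :=
        fRaw_eq_some hk1 hρn hρm hno_b1 ⟨hHi, hH1⟩ huq
      have hnc : ¬ containsEntry n (colShape k) b (i + 1) := by
        rintro ⟨r, c, hrn, hclt, hmem⟩
        have hcs : colShape k r ≤ 1 := by rw [colShape_apply]; split <;> omega
        have hc0 : c = 0 := by omega
        exact hH1 ⟨r, hrn, hc0 ▸ hmem⟩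
      have hfK : fK n (colShape k) i b = some fKb := by
        apply fK_eq_some hρn hρk hρm hnc
        rintro p ⟨hp1, hp2, hp3, -⟩
        have hcs : colShape k p.1 ≤ 1 := by rw [colShape_apply]; split <;> omega
        have hc0 : p.2 = 0 := by omega
        rw [hc0] at hp3
        exact Prod.ext (huq p.1 hp1 hp3) hc0
      have hfb_rho : fb ρ 0 = insert (i + 1) ((b ρ 0).erase i) := updateBox_same b ρ 0 _
      have hfKb_rho : fKb ρ 0 = insert (i + 1) (b ρ 0) := updateBox_same b ρ 0 _
      have hfb_ne : ∀ r, r ≠ ρ → fb r 0 = b r 0 :=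
        fun r hr => updateBox_ne b ρ 0 _ (fun h => hr h.1)
      have hfKb_ne : ∀ r, r ≠ ρ → fKb r 0 = b r 0 :=
        fun r hr => updateBox_ne b ρ 0 _ (fun h => hr h.1)
      have hfb_svt : IsSVT n (colShape k) fb := by
        apply isSVT_insert_succ hb hkn hin hρm hH1
        · intro x hx
          rcases Finset.mem_insert.mp hx with rfl | h
          · exact Or.inl rfl
          · exact Or.inr (Finset.mem_of_mem_erase h)
        · exact Finset.mem_insert_self _ _
      have hfKb_svt : IsSVT n (colShape k) fKb := by
        apply isSVT_insert_succ hb hkn hin hρm hH1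
        · intro x hx
          rcases Finset.mem_insert.mp hx with rfl | h
          · exact Or.inl rfl
          · exact Or.inr h
        · exact Finset.mem_insert_self _ _
      have hf_fb : fRaw n (colShape k) i fb = none := by
        apply fRaw_eq_none hk1
        rintro ⟨-, hc2⟩
        exact hc2 ⟨ρ, hρn, by rw [hfb_rho]; exact Finset.mem_insert_self _ _⟩
      have hf_fKb : fRaw n (colShape k) i fKb = none := by
        apply fRaw_eq_none hk1
        rintro ⟨-, hc2⟩
        exact hc2 ⟨ρ, hρn, by rw [hfKb_rho]; exact Finset.mem_insert_self _ _⟩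
      have hSset : S = {b, fb, fKb} := by
        rw [hS]
        ext x
        simp only [Set.mem_setOf_eq, Set.mem_insert_iff, Set.mem_singleton_iff]
        constructor
        · rintro (⟨m, hm⟩ | ⟨t1, ht1, m, hm⟩)
          · rcases m with _ | m
            · exact Or.inl (Option.some.inj hm).symm
            · have hm' : iterOpt (fRaw n (colShape k) i) (1 + m) b = some x := by
                rw [Nat.add_comm]; exact hm
              rw [iterOpt_add, iterOpt_one, hf] at hm'
              have hm'' : iterOpt (fRaw n (colShape k) i) m fb = some x := hm'
              exact Or.inr (Or.inl (iterOpt_fixed _ fb hf_fb m x hm''))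
          · rw [hfK] at ht1
            have ht1' : t1 = fKb := (Option.some.inj ht1).symm
            subst ht1'
            exact Or.inr (Or.inr (iterOpt_fixed _ fKb hf_fKb m x hm))
        · rintro (rfl | rfl | rfl)
          · exact Or.inl ⟨0, rfl⟩
          · exact Or.inl ⟨1, by rw [iterOpt_one, hf]⟩
          · exact Or.inr ⟨fKb, hfK, 0, rfl⟩
      have hP2 : phiF k (Jset k word) fb → phiF k (Jset k word) b := by
        intro h r hr x hx
        by_cases hrρ : r = ρ
        · by_cases hxi : x = i
          · rw [hxi]
            calc nuF (Jset k word) i ≤ nuF (Jset k word) (i + 1) := nuF_mono _ (by omega)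
              _ ≤ r := h r hr (i + 1)
                  (by rw [hrρ, hfb_rho]; exact Finset.mem_insert_self _ _)
          · refine h r hr x ?_
            rw [hrρ, hfb_rho]
            exact Finset.mem_insert_of_mem (Finset.mem_erase.mpr ⟨hxi, hrρ ▸ hx⟩)
        · exact h r hr x (by rw [hfb_ne r hrρ]; exact hx)
      have hP1 : phiF k (Jset k word) fb → phiF k (Jset k word) fKb := by
        intro h r hr x hx
        by_cases hrρ : r = ρ
        · have hx' : x ∈ insert (i + 1) (b ρ 0) := by rw [← hfKb_rho, ← hrρ]; exact hx
          rcases Finset.mem_insert.mp hx' with hxe | hxb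
          · rw [hxe]
            exact h r hr (i + 1) (by rw [hrρ, hfb_rho]; exact Finset.mem_insert_self _ _)
          · by_cases hxi : x = i
            · rw [hxi]
              calc nuF (Jset k word) i ≤ nuF (Jset k word) (i + 1) := nuF_mono _ (by omega)
                _ ≤ r := h r hr (i + 1)
                    (by rw [hrρ, hfb_rho]; exact Finset.mem_insert_self _ _)
            · refine h r hr x ?_
              rw [hrρ, hfb_rho]
              exact Finset.mem_insert_of_mem (Finset.mem_erase.mpr ⟨hxi, hxb⟩)
        · rw [hfKb_ne r hrρ] at hx
          exact h r hr x (by rw [hfb_ne r hrρ]; exact hx)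
      have hP1' : phiF k (Jset k word) fKb → phiF k (Jset k word) fb := by
        intro h r hr x hx
        by_cases hrρ : r = ρ
        · have hx' : x ∈ insert (i + 1) ((b ρ 0).erase i) := by
            rw [← hfb_rho, ← hrρ]; exact hx
          rcases Finset.mem_insert.mp hx' with hxe | hxb
          · rw [hxe]
            exact h r hr (i + 1) (by rw [hrρ, hfKb_rho]; exact Finset.mem_insert_self _ _)
          · refine h r hr x ?_
            rw [hrρ, hfKb_rho]
            exact Finset.mem_insert_of_mem (Finset.mem_of_mem_erase hxb)
        · rw [hfb_ne r hrρ] at hx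
          exact h r hr x (by rw [hfKb_ne r hrρ]; exact hx)
      rw [hSset]
      by_cases h1 : phiF k (Jset k word) fb
      · right; left
        apply Set.inter_eq_right.mpr
        intro x hx
        simp only [Set.mem_insert_iff, Set.mem_singleton_iff] at hx
        rcases hx with hxe | hxe | hxe
        · rw [hxe]; exact (hchar b hb).mpr (hP2 h1)
        · rw [hxe]; exact (hchar fb hfb_svt).mpr h1
        · rw [hxe]; exact (hchar fKb hfKb_svt).mpr (hP1 h1)
      · by_cases h0 : phiF k (Jset k word) b
        · right; right
          ext x
          constructor
          · rintro ⟨hK, hxS⟩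
            simp only [Set.mem_insert_iff, Set.mem_singleton_iff] at hxS
            rcases hxS with hxe | hxe | hxe
            · exact hxe
            · rw [hxe] at hK; exact absurd ((hchar fb hfb_svt).mp hK) h1
            · rw [hxe] at hK; exact absurd (hP1' ((hchar fKb hfKb_svt).mp hK)) h1
          · intro hx
            have hxb : x = b := hx
            rw [hxb]
            exact ⟨(hchar b hb).mpr h0, Or.inl rfl⟩
        · left
          rw [Set.eq_empty_iff_forall_notMem]
          rintro x ⟨hK, hxS⟩
          simp only [Set.mem_insert_iff, Set.mem_singleton_iff] at hxS
          rcases hxS with hxe | hxe | hxe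
          · rw [hxe] at hK; exact h0 ((hchar b hb).mp hK)
          · rw [hxe] at hK; exact h1 ((hchar fb hfb_svt).mp hK)
          · rw [hxe] at hK; exact h1 (hP1' ((hchar fKb hfKb_svt).mp hK))
    · -- `i` does not occur in `b`: the string is `{b}`
      apply singleton_case
      · exact fRaw_eq_none hk1 (fun hc => hHi hc.1)
      · apply fK_eq_none
        rintro ⟨⟨p, hp⟩, -⟩
        obtain ⟨hp1, hp2, hp3, -⟩ := hp
        have hcs : colShape k p.1 ≤ 1 := by rw [colShape_apply]; split <;> omega
        have hc0 : p.2 = 0 := by omega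
        exact hHi ⟨p.1, hp1, hc0 ▸ hp3⟩


end SVTCrystal

end
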